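/- Let $k$ be a field of characteristic $p > 0$ and $B = k\langle x, d\rangle/(dx - xd - 1, d^p)$. In $B^e = B \otimes_{k[x]} B$, the kernel of right multiplication by $d \otimes 1 - 1 \otimes d$ equals the left ideal generated by $\sum_{i=0}^{p-1} d^{p-1-i} \otimes d^i$. -/

import Mathlib

/-- The defining relations `d * x = x * d + 1` and `d^p = 0` of the reduced Weyl
algebra `B = k⟨x,d⟩/(dx - xd - 1, d^p)` (generator `false` is `x`, `true` is `d`). -/
inductive RWRel (k : Type) [Field k] (p : ℕ) :
    FreeAlgebra k Bool → FreeAlgebra k Bool → Prop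
  | weyl : RWRel k p (FreeAlgebra.ι k true * FreeAlgebra.ι k false)
      (FreeAlgebra.ι k false * FreeAlgebra.ι k true + 1)
  | dp : RWRel k p (FreeAlgebra.ι k true ^ p) 0

/-- The generator `x` of the reduced Weyl algebra. -/
noncomputable def Bx (k : Type) [Field k] (p : ℕ) : RingQuot (RWRel k p) :=
  RingQuot.mkAlgHom k (RWRel k p) (FreeAlgebra.ι k false)

/-- The generator `d` of the reduced Weyl algebra. -/
noncomputable def Bd (k : Type) [Field k] (p : ℕ) : RingQuot (RWRel k p) :=
  RingQuot.mkAlgHom k (RWRel k p) (FreeAlgebra.ι k true)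
set_option maxHeartbeats 1000000
set_option maxSynthPendingDepth 3
set_option synthInstance.maxHeartbeats 400000

open scoped TensorProduct

/-- The canonical map `k[x] → B` sending `X` to `x`. -/
noncomputable def phi (k : Type) [Field k] (p : ℕ) : Polynomial k →+* RingQuot (RWRel k p) :=
  (Polynomial.aeval (Bx k p)).toRingHom

/-- `B` as a `k[x]`-module via left multiplication through `phi`. -/
noncomputable instance (k : Type) [Field k] (p : ℕ) :
    Module (Polynomial k) (RingQuot (RWRel k p)) :=
  Module.compHom _ (phi k p)

/-- Right multiplication by `c` on `B`, as a `k[x]`-linear map. -/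
noncomputable def mulRightLin (k : Type) [Field k] (p : ℕ) (c : RingQuot (RWRel k p)) :
    RingQuot (RWRel k p) →ₗ[Polynomial k] RingQuot (RWRel k p) where
  toFun a := a * c
  map_add' a b := add_mul a b c
  map_smul' f a := by
    show (phi k p f * a) * c = phi k p f * (a * c)
    rw [mul_assoc]

/-- Right multiplication by `δ = d ⊗ 1 - 1 ⊗ d` on `B ⊗_{k[x]} B`, acting
componentwise on pure tensors. -/
noncomputable def rdelta (k : Type) [Field k] (p : ℕ) :
    RingQuot (RWRel k p) ⊗[Polynomial k] RingQuot (RWRel k p) →ₗ[Polynomial k]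
      RingQuot (RWRel k p) ⊗[Polynomial k] RingQuot (RWRel k p) :=
  TensorProduct.map (mulRightLin k p (Bd k p))
      (LinearMap.id : RingQuot (RWRel k p) →ₗ[Polynomial k] RingQuot (RWRel k p)) -
    TensorProduct.map
      (LinearMap.id : RingQuot (RWRel k p) →ₗ[Polynomial k] RingQuot (RWRel k p))
      (mulRightLin k p (Bd k p))

/-- Right multiplication by `σ = ∑ d^(p-1-i) ⊗ d^i` on `B ⊗_{k[x]} B`, acting
componentwise on pure tensors. -/
noncomputable def rsigma (k : Type) [Field k] (p : ℕ) :
    RingQuot (RWRel k p) ⊗[Polynomial k] RingQuot (RWRel k p) →ₗ[Polynomial k]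
      RingQuot (RWRel k p) ⊗[Polynomial k] RingQuot (RWRel k p) :=
  ∑ i ∈ Finset.range p,
    TensorProduct.map (mulRightLin k p (Bd k p ^ (p - 1 - i)))
      (mulRightLin k p (Bd k p ^ i))

/-- The element `δ = d ⊗ 1 - 1 ⊗ d` of `B ⊗_{k[x]} B`. -/
noncomputable def deltaElem (k : Type) [Field k] (p : ℕ) :
    RingQuot (RWRel k p) ⊗[Polynomial k] RingQuot (RWRel k p) :=
  (Bd k p) ⊗ₜ[Polynomial k] (1 : RingQuot (RWRel k p))
    - (1 : RingQuot (RWRel k p)) ⊗ₜ[Polynomial k] (Bd k p)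

/-- The element `σ = ∑_{i=0}^{p-1} d^(p-1-i) ⊗ d^i` of `B ⊗_{k[x]} B`. -/
noncomputable def sigmaElem (k : Type) [Field k] (p : ℕ) :
    RingQuot (RWRel k p) ⊗[Polynomial k] RingQuot (RWRel k p) :=
  ∑ i ∈ Finset.range p, (Bd k p ^ (p - 1 - i)) ⊗ₜ[Polynomial k] (Bd k p ^ i)

noncomputable instance (k : Type) [Field k] (p : ℕ) :
    Zero (RingQuot (RWRel k p) ⊗[Polynomial k] RingQuot (RWRel k p)) :=
  (inferInstance : AddCommMonoid
    (RingQuot (RWRel k p) ⊗[Polynomial k] RingQuot (RWRel k p))).toAddMonoid.toZero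


namespace S17

open Polynomial

variable (k : Type) [Field k] (p : ℕ)

abbrev B := RingQuot (RWRel k p)

lemma smul_def (f : Polynomial k) (a : B k p) : f • a = phi k p f * a := rfl

lemma phi_X : phi k p Polynomial.X = Bx k p := by simp [phi]

lemma phi_C (a : k) : phi k p (Polynomial.C a) = algebraMap k (B k p) a := by simp [phi]

lemma d_pow_p : (Bd k p) ^ p = 0 := by
  have h := RingQuot.mkAlgHom_rel k (RWRel.dp (k := k) (p := p))
  simpa [Bd, map_pow] using h

lemma weyl : Bd k p * Bx k p = Bx k p * Bd k p + 1 := by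
  have h := RingQuot.mkAlgHom_rel k (RWRel.weyl (k := k) (p := p))
  simpa [Bd, Bx, map_mul, map_add, map_one] using h

/-! ### The representation on `V = Fin p → k[X]` -/

noncomputable def Sh : (Fin p → Polynomial k) →ₗ[k] (Fin p → Polynomial k) where
  toFun v i := if h : 0 < (i : ℕ) then v ⟨(i : ℕ) - 1, lt_of_le_of_lt (Nat.sub_le _ _) i.isLt⟩ else 0
  map_add' u v := by funext i; by_cases h : 0 < (i : ℕ) <;> simp [h]
  map_smul' c v := by funext i; by_cases h : 0 < (i : ℕ) <;> simp [h]

noncomputable def De : (Fin p → Polynomial k) →ₗ[k] (Fin p → Polynomial k) where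
  toFun v i := Polynomial.derivative (v i)
  map_add' u v := by funext i; simp
  map_smul' c v := by funext i; simp

noncomputable def Xhat : (Fin p → Polynomial k) →ₗ[k] (Fin p → Polynomial k) where
  toFun v i := Polynomial.X * v i
  map_add' u v := by funext i; simp [mul_add]
  map_smul' c v := by funext i; simp [mul_smul_comm]

noncomputable def Dhat : (Fin p → Polynomial k) →ₗ[k] (Fin p → Polynomial k) :=
  Sh k p + De k p

lemma relDX : Dhat k p * Xhat k p = Xhat k p * Dhat k p + 1 := by
  apply LinearMap.ext
  intro v
  funext i
  simp only [Dhat, Module.End.mul_apply, LinearMap.add_apply, Module.End.one_apply, Sh, De, Xhat,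
    LinearMap.coe_mk, AddHom.coe_mk, Pi.add_apply]
  rw [Polynomial.derivative_mul, Polynomial.derivative_X]
  by_cases h : 0 < (i : ℕ) <;> simp [h] <;> ring

lemma Sh_pow_aux : ∀ (n : ℕ) (v : Fin p → Polynomial k) (i : Fin p), (i : ℕ) < n →
    ((Sh k p ^ n) v) i = 0 := by
  intro n
  induction n with
  | zero => intro v i h; exact absurd h (Nat.not_lt_zero _)
  | succ n ih =>
    intro v i h
    rw [pow_succ', Module.End.mul_apply]
    show (Sh k p) ((Sh k p ^ n) v) i = 0
    simp only [Sh, LinearMap.coe_mk, AddHom.coe_mk]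
    by_cases h0 : 0 < (i : ℕ)
    · rw [dif_pos h0]
      apply ih
      show (i : ℕ) - 1 < n
      omega
    · rw [dif_neg h0]

lemma Sh_pow_p : Sh k p ^ p = 0 := by
  apply LinearMap.ext
  intro v
  funext i
  rw [LinearMap.zero_apply]
  show ((Sh k p ^ p) v) i = (0 : Polynomial k)
  exact Sh_pow_aux k p p v i i.isLt

lemma deriv_iterate_p (hp : p.Prime) [CharP k p] (q : Polynomial k) :
    Polynomial.derivative^[p] q = 0 := by
  ext m
  rw [Polynomial.coeff_iterate_derivative, Polynomial.coeff_zero]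
  obtain ⟨t, ht⟩ : p ∣ (m + p).descFactorial p :=
    dvd_trans (Nat.dvd_factorial hp.pos le_rfl) (Nat.factorial_dvd_descFactorial _ _)
  rw [ht, nsmul_eq_mul, Nat.cast_mul, CharP.cast_eq_zero, zero_mul, zero_mul]

lemma De_pow_aux : ∀ (n : ℕ) (v : Fin p → Polynomial k) (i : Fin p),
    ((De k p ^ n) v) i = Polynomial.derivative^[n] (v i) := by
  intro n
  induction n with
  | zero => intro v i; simp
  | succ n ih =>
    intro v i
    rw [pow_succ', Module.End.mul_apply]
    show Polynomial.derivative (((De k p ^ n) v) i) = _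
    rw [ih, Function.iterate_succ_apply']

lemma De_pow_p (hp : p.Prime) [CharP k p] : De k p ^ p = 0 := by
  apply LinearMap.ext
  intro v
  funext i
  rw [LinearMap.zero_apply]
  show ((De k p ^ p) v) i = (0 : Polynomial k)
  rw [De_pow_aux, deriv_iterate_p k p hp]

lemma Sh_comm_De : Commute (Sh k p) (De k p) := by
  apply LinearMap.ext
  intro v
  funext i
  show (Sh k p) ((De k p) v) i = (De k p) ((Sh k p) v) i
  simp only [Sh, De, LinearMap.coe_mk, AddHom.coe_mk]
  by_cases h : 0 < (i : ℕ) <;> simp [h]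

lemma Dhat_pow_p (hp : p.Prime) [CharP k p] : Dhat k p ^ p = 0 := by
  haveI : Fact p.Prime := ⟨hp⟩
  haveI : Nontrivial (Fin p → Polynomial k) := by
    refine ⟨0, (fun _ => 1), fun h => ?_⟩
    have := congrFun h ⟨0, hp.pos⟩
    simp at this
  haveI : Nontrivial (Module.End k (Fin p → Polynomial k)) := by
    refine ⟨0, 1, fun h => ?_⟩
    obtain ⟨v, w, hvw⟩ := exists_pair_ne (Fin p → Polynomial k)
    have h1 := congrFun (congrArg DFunLike.coe h) (v - w)
    simp only [LinearMap.zero_apply, Module.End.one_apply] at h1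
    exact hvw (by rw [← sub_eq_zero, ← h1])
  haveI : CharP (Module.End k (Fin p → Polynomial k)) p :=
    charP_of_injective_algebraMap' (A := Module.End k (Fin p → Polynomial k)) k p
  rw [Dhat, add_pow_char_of_commute p (Sh_comm_De k p), Sh_pow_p, De_pow_p k p hp, add_zero]

noncomputable def rho0 : FreeAlgebra k Bool →ₐ[k] Module.End k (Fin p → Polynomial k) :=
  FreeAlgebra.lift k (fun b => if b then Dhat k p else Xhat k p)

lemma rho0_rel (hp : p.Prime) [CharP k p] :
    ∀ ⦃x y : FreeAlgebra k Bool⦄, RWRel k p x y → rho0 k p x = rho0 k p y := by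
  intro x y h
  cases h with
  | weyl =>
    simp only [map_mul, map_add, map_one, rho0, FreeAlgebra.lift_ι_apply, if_true, if_false]
    exact relDX k p
  | dp =>
    simp only [map_pow, map_zero, rho0, FreeAlgebra.lift_ι_apply, if_true]
    exact Dhat_pow_p k p hp

noncomputable def rho (hp : p.Prime) [CharP k p] :
    B k p →ₐ[k] Module.End k (Fin p → Polynomial k) :=
  RingQuot.liftAlgHom k ⟨rho0 k p, rho0_rel k p hp⟩

variable (hp : p.Prime) [CharP k p]
set_option linter.unusedSectionVars false

lemma rho_d : rho k p hp (Bd k p) = Dhat k p := by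
  rw [Bd, rho, RingQuot.liftAlgHom_mkAlgHom_apply, rho0, FreeAlgebra.lift_ι_apply, if_pos rfl]

lemma rho_x : rho k p hp (Bx k p) = Xhat k p := by
  rw [Bx, rho, RingQuot.liftAlgHom_mkAlgHom_apply, rho0, FreeAlgebra.lift_ι_apply]
  rfl

/-! ### Coefficient extraction -/

noncomputable def eV (m : ℕ) : Fin p → Polynomial k := fun j => if (j : ℕ) = m then 1 else 0

lemma Dhat_eV (m : ℕ) : Dhat k p (eV k p m) = eV k p (m + 1) := by
  funext i
  show (Sh k p) (eV k p m) i + (De k p) (eV k p m) i = _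
  simp only [Sh, De, eV, LinearMap.coe_mk, AddHom.coe_mk]
  have hd : Polynomial.derivative (if ((i : ℕ) = m) then (1 : Polynomial k) else 0) = 0 := by
    split_ifs <;> simp
  rw [hd, add_zero]
  by_cases h : 0 < (i : ℕ)
  · rw [dif_pos h]
    show (if ((i : ℕ) - 1 = m) then (1 : Polynomial k) else 0) = _
    split_ifs with h1 h2 <;> first | rfl | omega
  · rw [dif_neg h]
    split_ifs with h1 <;> first | rfl | omega

lemma Dhat_pow_e0 (i : ℕ) : (Dhat k p ^ i) (eV k p 0) = eV k p i := by
  induction i with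
  | zero => simp
  | succ n ih => rw [pow_succ', Module.End.mul_apply, ih, Dhat_eV]

lemma Xhat_pow (n : ℕ) (w : Fin p → Polynomial k) :
    (Xhat k p ^ n) w = (Polynomial.X ^ n : Polynomial k) • w := by
  induction n with
  | zero => simp
  | succ n ih =>
    rw [pow_succ', Module.End.mul_apply, ih]
    funext i
    show Polynomial.X * ((Polynomial.X : Polynomial k) ^ n • w) i = ((Polynomial.X : Polynomial k) ^ (n+1) • w) i
    simp only [Pi.smul_apply, smul_eq_mul, pow_succ]
    ring

lemma aeval_Xhat (f : Polynomial k) (w : Fin p → Polynomial k) :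
    (Polynomial.aeval (Xhat k p) f) w = f • w := by
  induction f using Polynomial.induction_on' with
  | add f g hf hg => simp [hf, hg, add_smul]
  | monomial n a =>
    rw [Polynomial.aeval_monomial, Module.End.mul_apply, Module.algebraMap_end_apply,
      Xhat_pow]
    funext i
    simp only [Pi.smul_apply, smul_eq_mul, Polynomial.smul_eq_C_mul]
    rw [← Polynomial.C_mul_X_pow_eq_monomial]
    ring

lemma rho_phi_apply (f : Polynomial k) (w : Fin p → Polynomial k) :
    rho k p hp (phi k p f) w = f • w := by
  have h1 : phi k p f = Polynomial.aeval (Bx k p) f := rfl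
  rw [h1, ← Polynomial.aeval_algHom_apply, rho_x, aeval_Xhat]

noncomputable def coef : B k p →ₗ[Polynomial k] (Fin p → Polynomial k) where
  toFun b := rho k p hp b (eV k p 0)
  map_add' a b := by simp
  map_smul' f b := by
    show rho k p hp (phi k p f * b) (eV k p 0) = f • rho k p hp b (eV k p 0)
    rw [map_mul, Module.End.mul_apply, rho_phi_apply]

lemma coef_pow (i : ℕ) : coef k p hp (Bd k p ^ i) = eV k p i := by
  show rho k p hp (Bd k p ^ i) (eV k p 0) = eV k p i
  rw [map_pow, rho_d]
  exact Dhat_pow_e0 k p i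

/-! ### Spanning -/

def genSet : Set (B k p) := Set.range (fun i : Fin p => Bd k p ^ (i : ℕ))

lemma x_mul_phi (f : Polynomial k) : Bx k p * phi k p f = phi k p f * Bx k p := by
  rw [← phi_X, ← map_mul, ← map_mul, mul_comm]

lemma d_mul_phi (f : Polynomial k) :
    Bd k p * phi k p f = phi k p f * Bd k p + phi k p (Polynomial.derivative f) := by
  induction f using Polynomial.induction_on with
  | C a =>
    rw [phi_C, Polynomial.derivative_C, map_zero, add_zero, Algebra.commutes]
  | add f g hf hg =>
    rw [map_add, mul_add, add_mul, hf, hg, map_add, map_add]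
    abel
  | monomial n a ih =>
    rw [show Polynomial.C a * Polynomial.X ^ (n + 1)
        = Polynomial.C a * Polynomial.X ^ n * Polynomial.X from by ring]
    generalize hq : Polynomial.C a * Polynomial.X ^ n = q at ih ⊢
    rw [Polynomial.derivative_mul, Polynomial.derivative_X, mul_one, map_add]
    simp only [map_mul, phi_X]
    rw [← mul_assoc, ih, add_mul, mul_assoc (phi k p q), weyl]
    noncomm_ring

include hp in
lemma span_top : Submodule.span (Polynomial k) (genSet k p) = ⊤ := by
  set S := Submodule.span (Polynomial k) (genSet k p) with hS
  have h1 : (1 : B k p) ∈ S := Submodule.subset_span ⟨⟨0, hp.pos⟩, by simp⟩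
  have hsm : ∀ (f : Polynomial k) (s : B k p), phi k p f * s = f • s := fun f s => rfl
  have hx : ∀ s ∈ S, Bx k p * s ∈ S := by
    intro s hs
    induction hs using Submodule.span_induction with
    | mem t ht =>
      obtain ⟨i, rfl⟩ := ht
      rw [← phi_X, hsm]
      exact Submodule.smul_mem _ _ (Submodule.subset_span ⟨i, rfl⟩)
    | zero => rw [mul_zero]; exact Submodule.zero_mem _
    | add u v hu hv ihu ihv => rw [mul_add]; exact Submodule.add_mem _ ihu ihv
    | smul f t ht iht =>
      have heq : Bx k p * (f • t) = f • (Bx k p * t) := by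
        show Bx k p * (phi k p f * t) = phi k p f * (Bx k p * t)
        rw [← mul_assoc, x_mul_phi, mul_assoc]
      rw [heq]
      exact Submodule.smul_mem _ _ iht
  have hd : ∀ s ∈ S, Bd k p * s ∈ S := by
    intro s hs
    induction hs using Submodule.span_induction with
    | mem t ht =>
      obtain ⟨i, rfl⟩ := ht
      rw [← pow_succ']
      by_cases hi : (i : ℕ) + 1 < p
      · exact Submodule.subset_span ⟨⟨(i : ℕ) + 1, hi⟩, rfl⟩
      · have : (i : ℕ) + 1 = p := by have := i.isLt; omega
        rw [this, d_pow_p]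
        exact Submodule.zero_mem _
    | zero => rw [mul_zero]; exact Submodule.zero_mem _
    | add u v hu hv ihu ihv => rw [mul_add]; exact Submodule.add_mem _ ihu ihv
    | smul f t ht iht =>
      have heq : Bd k p * (f • t) = f • (Bd k p * t) + (Polynomial.derivative f) • t := by
        show Bd k p * (phi k p f * t)
            = phi k p f * (Bd k p * t) + phi k p (Polynomial.derivative f) * t
        rw [← mul_assoc, d_mul_phi, add_mul, mul_assoc]
      rw [heq]
      exact Submodule.add_mem _ (Submodule.smul_mem _ _ iht) (Submodule.smul_mem _ _ ht)
  have hmul : ∀ (b : B k p), ∀ s ∈ S, b * s ∈ S := by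
    intro b
    obtain ⟨a, rfl⟩ := RingQuot.mkAlgHom_surjective k (RWRel k p) b
    induction a using FreeAlgebra.induction with
    | grade0 r =>
      intro s hs
      have : (RingQuot.mkAlgHom k (RWRel k p)) (algebraMap k (FreeAlgebra k Bool) r) * s
          = (Polynomial.C r) • s := by
        rw [AlgHom.commutes, ← phi_C, hsm]
      rw [this]
      exact Submodule.smul_mem _ _ hs
    | grade1 b =>
      cases b with
      | false => exact hx
      | true => exact hd
    | mul a b iha ihb =>
      intro s hs
      rw [map_mul, mul_assoc]
      exact iha _ (ihb _ hs)
    | add a b iha ihb =>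
      intro s hs
      rw [map_add, add_mul]
      exact Submodule.add_mem _ (iha _ hs) (ihb _ hs)
  rw [eq_top_iff]
  intro b _
  simpa using hmul b 1 h1

lemma reprB (a : B k p) : ∑ i : Fin p, (coef k p hp a i) • (Bd k p ^ (i : ℕ)) = a := by
  have h : (∑ i : Fin p, (LinearMap.proj i ∘ₗ coef k p hp).smulRight (Bd k p ^ (i : ℕ)))
      = LinearMap.id (R := Polynomial k) (M := B k p) := by
    apply LinearMap.ext_on (span_top k p hp)
    rintro b ⟨j, rfl⟩
    simp only [LinearMap.sum_apply, LinearMap.smulRight_apply, LinearMap.comp_apply,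
      LinearMap.proj_apply, LinearMap.id_apply, coef_pow, eV]
    rw [Finset.sum_congr rfl (fun i _ => by
      rw [show ((if ((i : ℕ) = (j : ℕ)) then (1 : Polynomial k) else 0) • Bd k p ^ (i : ℕ))
        = (if j = i then Bd k p ^ (i : ℕ) else 0) from by
          rcases eq_or_ne i j with h | h
          · simp [h, Fin.val_eq_val]
          · rw [if_neg (by simpa [Fin.val_eq_val] using (Fin.val_ne_iff).2 h),
              if_neg (Ne.symm h), zero_smul]])]
    simp
  have := LinearMap.congr_fun h a
  simpa using this

/-! ### Tensor product coordinates -/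

@[simp] lemma mulRightLin_apply (c a : B k p) : mulRightLin k p c a = a * c := rfl

noncomputable def bil : B k p →ₗ[Polynomial k] B k p →ₗ[Polynomial k]
    (Fin p → Fin p → Polynomial k) :=
  LinearMap.mk₂ (Polynomial k) (fun a b => fun i j => coef k p hp a i * coef k p hp b j)
    (fun a a' b => by funext i j; simp [map_add, add_mul])
    (fun f a b => by
      funext i j
      simp only [map_smul, Pi.smul_apply, smul_eq_mul]
      ring)
    (fun a b b' => by funext i j; simp [map_add, mul_add])
    (fun f a b => by
      funext i j
      simp only [map_smul, Pi.smul_apply, smul_eq_mul]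
      ring)

noncomputable def toW : (B k p ⊗[Polynomial k] B k p) →ₗ[Polynomial k]
    (Fin p → Fin p → Polynomial k) :=
  TensorProduct.lift (bil k p hp)

lemma toW_tmul (a b : B k p) (i j : Fin p) :
    toW k p hp (a ⊗ₜ[Polynomial k] b) i j = coef k p hp a i * coef k p hp b j := rfl

noncomputable def toBe : (Fin p → Fin p → Polynomial k) →ₗ[Polynomial k]
    (B k p ⊗[Polynomial k] B k p) where
  toFun F := ∑ i : Fin p, ∑ j : Fin p,
    F i j • ((Bd k p ^ (i : ℕ)) ⊗ₜ[Polynomial k] (Bd k p ^ (j : ℕ)))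
  map_add' F G := by
    rw [← Finset.sum_add_distrib]
    refine Finset.sum_congr rfl fun i _ => ?_
    rw [← Finset.sum_add_distrib]
    refine Finset.sum_congr rfl fun j _ => ?_
    simp [add_smul]
  map_smul' f F := by
    simp only [RingHom.id_apply, Pi.smul_apply, smul_eq_mul, mul_smul, Finset.smul_sum]

lemma smul_mul_tmul (ci cj : Polynomial k) (u v : B k p) :
    (ci * cj) • (u ⊗ₜ[Polynomial k] v) = (ci • u) ⊗ₜ[Polynomial k] (cj • v) := by
  rw [mul_comm ci cj, mul_smul]
  simp only [TensorProduct.smul_tmul']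
  rw [TensorProduct.smul_tmul]

lemma toBe_toW (s : B k p ⊗[Polynomial k] B k p) : toBe k p (toW k p hp s) = s := by
  have h : (toBe k p) ∘ₗ (toW k p hp)
      = LinearMap.id (R := Polynomial k) (M := B k p ⊗[Polynomial k] B k p) := by
    apply TensorProduct.ext'
    intro a b
    simp only [LinearMap.comp_apply, LinearMap.id_apply]
    show ∑ i : Fin p, ∑ j : Fin p, (coef k p hp a i * coef k p hp b j) •
        ((Bd k p ^ (i : ℕ)) ⊗ₜ[Polynomial k] (Bd k p ^ (j : ℕ))) = a ⊗ₜ[Polynomial k] b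
    simp only [smul_mul_tmul]
    simp only [← TensorProduct.tmul_sum]
    rw [reprB k p hp b]
    rw [← TensorProduct.sum_tmul, reprB k p hp a]
  exact LinearMap.congr_fun h s

lemma eV_apply (m : ℕ) (j : Fin p) : eV k p m j = if (j : ℕ) = m then 1 else 0 := rfl

lemma toW_pow (m n : ℕ) (i j : Fin p) :
    toW k p hp ((Bd k p ^ m) ⊗ₜ[Polynomial k] (Bd k p ^ n)) i j
      = (if (i : ℕ) = m then 1 else 0) * (if (j : ℕ) = n then 1 else 0) := by
  rw [toW_tmul, coef_pow, coef_pow, eV_apply, eV_apply]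

/-- The master index-collapsing lemma. -/
lemma sum_ite_shift {M : Type} [AddCommMonoid M] (c e : ℕ) (g : Fin p → M) :
    (∑ t : Fin p, if c = (t : ℕ) + e then g t else 0)
      = if h : e ≤ c ∧ c - e < p then g ⟨c - e, h.2⟩ else 0 := by
  by_cases h : e ≤ c ∧ c - e < p
  · rw [dif_pos h]
    rw [Finset.sum_eq_single (⟨c - e, h.2⟩ : Fin p)]
    · have hv : ((⟨c - e, h.2⟩ : Fin p) : ℕ) = c - e := rfl
      rw [if_pos (by omega)]
    · intro t _ ht
      rw [if_neg]
      intro hc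
      exact ht (by apply Fin.ext; show (t : ℕ) = c - e; omega)
    · intro habs; exact absurd (Finset.mem_univ _) habs
  · rw [dif_neg h]
    apply Finset.sum_eq_zero
    intro t _
    rw [if_neg]
    have := t.isLt
    omega

/-! ### The easy direction : `rdelta ∘ rsigma = 0` -/

lemma rdelta_tmul (u v : B k p) :
    rdelta k p (u ⊗ₜ[Polynomial k] v)
      = (u * Bd k p) ⊗ₜ[Polynomial k] v - u ⊗ₜ[Polynomial k] (v * Bd k p) := by
  simp [rdelta, TensorProduct.map_tmul]

lemma rsigma_tmul (u v : B k p) :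
    rsigma k p (u ⊗ₜ[Polynomial k] v)
      = ∑ m ∈ Finset.range p,
          (u * Bd k p ^ (p - 1 - m)) ⊗ₜ[Polynomial k] (v * Bd k p ^ m) := by
  simp [rsigma, TensorProduct.map_tmul, LinearMap.sum_apply]

lemma rdelta_rsigma (z : B k p ⊗[Polynomial k] B k p) : rdelta k p (rsigma k p z) = 0 := by
  have h : (rdelta k p) ∘ₗ (rsigma k p) = 0 := by
    apply TensorProduct.ext'
    intro a b
    simp only [LinearMap.comp_apply, LinearMap.zero_apply]
    rw [rsigma_tmul, map_sum]
    have hterm : ∀ m ∈ Finset.range p,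
        rdelta k p ((a * Bd k p ^ (p - 1 - m)) ⊗ₜ[Polynomial k] (b * Bd k p ^ m))
          = ((a * Bd k p ^ (p - m)) ⊗ₜ[Polynomial k] (b * Bd k p ^ m)
            - (a * Bd k p ^ (p - (m + 1))) ⊗ₜ[Polynomial k] (b * Bd k p ^ (m + 1))) := by
      intro m hm
      rw [Finset.mem_range] at hm
      rw [rdelta_tmul]
      congr 2
      · rw [mul_assoc, ← pow_succ]
        congr 2
        omega
      · congr 2
        omega
      · rw [mul_assoc, ← pow_succ]
    rw [Finset.sum_congr rfl hterm,
      Finset.sum_range_sub' (fun m => (a * Bd k p ^ (p - m)) ⊗ₜ[Polynomial k] (b * Bd k p ^ m))]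
    simp [Nat.sub_self, d_pow_p]
  exact LinearMap.congr_fun h z

/-! ### Index collapsing helpers -/

lemma sum_ite_id {M : Type} [AddCommMonoid M] (c : Fin p) (g : Fin p → M) :
    (∑ t : Fin p, if (c : ℕ) = (t : ℕ) then g t else 0) = g c := by
  rw [Finset.sum_eq_single c]
  · rw [if_pos rfl]
  · intro t _ ht
    rw [if_neg (fun hc => ht (Fin.ext hc.symm))]
  · intro habs; exact absurd (Finset.mem_univ _) habs

lemma sum_ite_succ {M : Type} [AddCommMonoid M] (c : Fin p) (g : Fin p → M) :
    (∑ t : Fin p, if (c : ℕ) = (t : ℕ) + 1 then g t else 0)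
      = if h : 0 < (c : ℕ)
          then g ⟨(c : ℕ) - 1, lt_of_le_of_lt (Nat.sub_le _ _) c.isLt⟩ else 0 := by
  by_cases h : 0 < (c : ℕ)
  · rw [dif_pos h]
    rw [Finset.sum_eq_single (⟨(c : ℕ) - 1, lt_of_le_of_lt (Nat.sub_le _ _) c.isLt⟩ : Fin p)]
    · rw [if_pos (by show (c : ℕ) = (c : ℕ) - 1 + 1; omega)]
    · intro t _ ht
      rw [if_neg]
      intro hc
      exact ht (Fin.ext (by show (t : ℕ) = (c : ℕ) - 1; omega))
    · intro habs; exact absurd (Finset.mem_univ _) habs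
  · rw [dif_neg h]
    apply Finset.sum_eq_zero
    intro t _
    rw [if_neg (by omega)]

lemma collapseA (F : Fin p → Fin p → Polynomial k) (a b : Fin p) :
    (∑ i : Fin p, ∑ j : Fin p, F i j *
        ((if (a : ℕ) = (i : ℕ) + 1 then (1 : Polynomial k) else 0) *
         (if (b : ℕ) = (j : ℕ) then (1 : Polynomial k) else 0)))
      = if h : 0 < (a : ℕ)
          then F ⟨(a : ℕ) - 1, lt_of_le_of_lt (Nat.sub_le _ _) a.isLt⟩ b else 0 := by
  have step1 : ∀ i : Fin p, (∑ j : Fin p, F i j *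
      ((if (a : ℕ) = (i : ℕ) + 1 then (1 : Polynomial k) else 0) *
       (if (b : ℕ) = (j : ℕ) then (1 : Polynomial k) else 0)))
      = (if (a : ℕ) = (i : ℕ) + 1 then F i b else 0) := by
    intro i
    have h1 : ∀ j : Fin p, F i j *
        ((if (a : ℕ) = (i : ℕ) + 1 then (1 : Polynomial k) else 0) *
         (if (b : ℕ) = (j : ℕ) then (1 : Polynomial k) else 0))
        = (if (b : ℕ) = (j : ℕ) then
            F i j * (if (a : ℕ) = (i : ℕ) + 1 then (1 : Polynomial k) else 0) else 0) :=
      fun j => by split_ifs <;> ring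
    rw [Finset.sum_congr rfl fun j _ => h1 j, sum_ite_id]
    split_ifs <;> ring
  rw [Finset.sum_congr rfl fun i _ => step1 i, sum_ite_succ]

lemma collapseB (F : Fin p → Fin p → Polynomial k) (a b : Fin p) :
    (∑ i : Fin p, ∑ j : Fin p, F i j *
        ((if (a : ℕ) = (i : ℕ) then (1 : Polynomial k) else 0) *
         (if (b : ℕ) = (j : ℕ) + 1 then (1 : Polynomial k) else 0)))
      = if h : 0 < (b : ℕ)
          then F a ⟨(b : ℕ) - 1, lt_of_le_of_lt (Nat.sub_le _ _) b.isLt⟩ else 0 := by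
  have step1 : ∀ i : Fin p, (∑ j : Fin p, F i j *
      ((if (a : ℕ) = (i : ℕ) then (1 : Polynomial k) else 0) *
       (if (b : ℕ) = (j : ℕ) + 1 then (1 : Polynomial k) else 0)))
      = (if (a : ℕ) = (i : ℕ) then
          (if h : 0 < (b : ℕ) then
            F i ⟨(b : ℕ) - 1, lt_of_le_of_lt (Nat.sub_le _ _) b.isLt⟩ else 0) else 0) := by
    intro i
    have h1 : ∀ j : Fin p, F i j *
        ((if (a : ℕ) = (i : ℕ) then (1 : Polynomial k) else 0) *
         (if (b : ℕ) = (j : ℕ) + 1 then (1 : Polynomial k) else 0))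
        = (if (b : ℕ) = (j : ℕ) + 1 then
            F i j * (if (a : ℕ) = (i : ℕ) then (1 : Polynomial k) else 0) else 0) :=
      fun j => by split_ifs <;> ring
    rw [Finset.sum_congr rfl fun j _ => h1 j, sum_ite_succ]
    by_cases hb : 0 < (b : ℕ)
    · rw [dif_pos hb, dif_pos hb]
      split_ifs <;> ring
    · rw [dif_neg hb, dif_neg hb]
      split_ifs <;> ring
  rw [Finset.sum_congr rfl fun i _ => step1 i, sum_ite_id]

/-! ### The key boundary equations -/

lemma key_eq (z : B k p ⊗[Polynomial k] B k p) (hz : rdelta k p z = 0) (a b : Fin p) :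
    (if h : 0 < (a : ℕ)
        then toW k p hp z ⟨(a : ℕ) - 1, lt_of_le_of_lt (Nat.sub_le _ _) a.isLt⟩ b else 0)
      = (if h : 0 < (b : ℕ)
          then toW k p hp z a ⟨(b : ℕ) - 1, lt_of_le_of_lt (Nat.sub_le _ _) b.isLt⟩ else 0) := by
  have h1 : rdelta k p z = ∑ i : Fin p, ∑ j : Fin p, toW k p hp z i j •
      ((Bd k p ^ ((i : ℕ) + 1)) ⊗ₜ[Polynomial k] (Bd k p ^ (j : ℕ))
        - (Bd k p ^ (i : ℕ)) ⊗ₜ[Polynomial k] (Bd k p ^ ((j : ℕ) + 1))) := by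
    conv_lhs => rw [← toBe_toW k p hp z]
    show rdelta k p (∑ i : Fin p, ∑ j : Fin p, toW k p hp z i j • _) = _
    rw [map_sum]
    refine Finset.sum_congr rfl fun i _ => ?_
    rw [map_sum]
    refine Finset.sum_congr rfl fun j _ => ?_
    rw [map_smul, rdelta_tmul, ← pow_succ, ← pow_succ]
  have h2 : toW k p hp (rdelta k p z) a b = 0 := by
    rw [hz, (toW k p hp).map_zero]
    rfl
  rw [h1, map_sum] at h2
  simp only [map_sum, map_smul, map_sub, Finset.sum_apply, Pi.smul_apply, Pi.sub_apply,
    smul_eq_mul, toW_pow, mul_sub] at h2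
  rw [Finset.sum_congr rfl (fun i (_ : i ∈ Finset.univ) => Finset.sum_sub_distrib _ _),
    Finset.sum_sub_distrib _ _, sub_eq_zero, collapseA, collapseB] at h2
  exact h2

lemma keyE1 (z : B k p ⊗[Polynomial k] B k p) (hz : rdelta k p z = 0) (a b : Fin p)
    (hb : (b : ℕ) + 1 < p) (ha : (a : ℕ) = 0) : toW k p hp z a b = 0 := by
  have h := key_eq k p hp z hz a ⟨(b : ℕ) + 1, hb⟩
  rw [dif_neg (by omega), dif_pos (Nat.succ_pos (b : ℕ))] at h
  have hfin : (⟨((⟨(b : ℕ) + 1, hb⟩ : Fin p) : ℕ) - 1,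
      lt_of_le_of_lt (Nat.sub_le _ _) (Fin.isLt _)⟩ : Fin p) = b :=
    Fin.ext (by show (b : ℕ) + 1 - 1 = (b : ℕ); omega)
  exact (congrArg (toW k p hp z a) hfin.symm).trans h.symm

lemma keyE2 (z : B k p ⊗[Polynomial k] B k p) (hz : rdelta k p z = 0) (a b : Fin p)
    (ha : 0 < (a : ℕ)) (hb : (b : ℕ) + 1 < p) :
    toW k p hp z a b
      = toW k p hp z ⟨(a : ℕ) - 1, lt_of_le_of_lt (Nat.sub_le _ _) a.isLt⟩
          ⟨(b : ℕ) + 1, hb⟩ := by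
  have h := key_eq k p hp z hz a ⟨(b : ℕ) + 1, hb⟩
  rw [dif_pos ha, dif_pos (Nat.succ_pos (b : ℕ))] at h
  have hfin : (⟨((⟨(b : ℕ) + 1, hb⟩ : Fin p) : ℕ) - 1,
      lt_of_le_of_lt (Nat.sub_le _ _) (Fin.isLt _)⟩ : Fin p) = b :=
    Fin.ext (by show (b : ℕ) + 1 - 1 = (b : ℕ); omega)
  rw [hfin] at h
  exact h.symm

lemma keyE3 (z : B k p ⊗[Polynomial k] B k p) (hz : rdelta k p z = 0) (a b : Fin p)
    (ha : (a : ℕ) + 1 < p) (hb : 0 < (b : ℕ)) :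
    toW k p hp z a b
      = toW k p hp z ⟨(a : ℕ) + 1, ha⟩
          ⟨(b : ℕ) - 1, lt_of_le_of_lt (Nat.sub_le _ _) b.isLt⟩ := by
  have h := key_eq k p hp z hz ⟨(a : ℕ) + 1, ha⟩ b
  rw [dif_pos (Nat.succ_pos (a : ℕ)), dif_pos hb] at h
  have hfin : (⟨((⟨(a : ℕ) + 1, ha⟩ : Fin p) : ℕ) - 1,
      lt_of_le_of_lt (Nat.sub_le _ _) (Fin.isLt _)⟩ : Fin p) = a :=
    Fin.ext (by show (a : ℕ) + 1 - 1 = (a : ℕ); omega)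
  rw [hfin] at h
  exact h

/-! ### Structure of kernel elements -/

lemma low_zero (z : B k p ⊗[Polynomial k] B k p) (hz : rdelta k p z = 0) :
    ∀ (n : ℕ) (a b : Fin p), (a : ℕ) ≤ n → (a : ℕ) + (b : ℕ) + 1 < p →
      toW k p hp z a b = 0 := by
  intro n
  induction n with
  | zero =>
    intro a b ha hab
    exact keyE1 k p hp z hz a b (by omega) (by omega)
  | succ n ih =>
    intro a b ha hab
    by_cases h0 : (a : ℕ) = 0
    · exact keyE1 k p hp z hz a b (by omega) h0
    · rw [keyE2 k p hp z hz a b (by omega) (by omega)]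
      exact ih _ _ (by show (a : ℕ) - 1 ≤ n; omega)
        (by show (a : ℕ) - 1 + ((b : ℕ) + 1) + 1 < p; omega)

lemma diag_const (z : B k p ⊗[Polynomial k] B k p) (hz : rdelta k p z = 0) :
    ∀ (n : ℕ) (a b : Fin p), p - 1 - (a : ℕ) ≤ n → p - 1 ≤ (a : ℕ) + (b : ℕ) →
      toW k p hp z a b
        = toW k p hp z ⟨p - 1, by have := a.isLt; omega⟩
            ⟨(a : ℕ) + (b : ℕ) - (p - 1), by have h1 := a.isLt; have h2 := b.isLt; omega⟩ := by
  intro n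
  induction n with
  | zero =>
    intro a b ha hab
    have hav : (a : ℕ) = p - 1 := by have := a.isLt; omega
    have e1 : (⟨p - 1, by have := a.isLt; omega⟩ : Fin p) = a := Fin.ext (by simp [hav])
    have e2 : (⟨(a : ℕ) + (b : ℕ) - (p - 1), by have h1 := a.isLt; have h2 := b.isLt; omega⟩
        : Fin p) = b := Fin.ext (by show (a : ℕ) + (b : ℕ) - (p - 1) = (b : ℕ); omega)
    rw [e1, e2]
  | succ n ih =>
    intro a b ha hab
    by_cases hav : (a : ℕ) = p - 1
    · have e1 : (⟨p - 1, by have := a.isLt; omega⟩ : Fin p) = a := Fin.ext (by simp [hav])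
      have e2 : (⟨(a : ℕ) + (b : ℕ) - (p - 1), by have h1 := a.isLt; have h2 := b.isLt; omega⟩
          : Fin p) = b := Fin.ext (by show (a : ℕ) + (b : ℕ) - (p - 1) = (b : ℕ); omega)
      rw [e1, e2]
    · have ha1 : (a : ℕ) + 1 < p := by have := a.isLt; omega
      have hb0 : 0 < (b : ℕ) := by have := a.isLt; omega
      rw [keyE3 k p hp z hz a b ha1 hb0]
      rw [ih ⟨(a : ℕ) + 1, ha1⟩ ⟨(b : ℕ) - 1, lt_of_le_of_lt (Nat.sub_le _ _) b.isLt⟩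
        (by show p - 1 - ((a : ℕ) + 1) ≤ n; omega)
        (by show p - 1 ≤ (a : ℕ) + 1 + ((b : ℕ) - 1); omega)]
      exact congrArg _ (Fin.ext (by
        show (a : ℕ) + 1 + ((b : ℕ) - 1) - (p - 1) = (a : ℕ) + (b : ℕ) - (p - 1)
        omega))

/-! ### The preimage -/

lemma rsigma_pow_one (t : ℕ) :
    rsigma k p ((Bd k p ^ t) ⊗ₜ[Polynomial k] (1 : B k p))
      = ∑ m ∈ Finset.range p,
          (Bd k p ^ (t + (p - 1 - m))) ⊗ₜ[Polynomial k] (Bd k p ^ m) := by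
  rw [rsigma_tmul]
  refine Finset.sum_congr rfl fun m _ => ?_
  rw [one_mul, ← pow_add]

lemma toW_rsigma_pow_one (t : ℕ) (i j : Fin p) :
    toW k p hp (rsigma k p ((Bd k p ^ t) ⊗ₜ[Polynomial k] (1 : B k p))) i j
      = if (i : ℕ) = t + (p - 1 - (j : ℕ)) then 1 else 0 := by
  rw [rsigma_pow_one, map_sum]
  simp only [Finset.sum_apply, toW_pow]
  have h1 : ∀ m ∈ Finset.range p,
      (if (i : ℕ) = t + (p - 1 - m) then (1 : Polynomial k) else 0) *
        (if (j : ℕ) = m then (1 : Polynomial k) else 0)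
      = (if (j : ℕ) = m then
          (if (i : ℕ) = t + (p - 1 - m) then (1 : Polynomial k) else 0) else 0) :=
    fun m _ => by split_ifs <;> ring
  rw [Finset.sum_congr rfl h1,
    Finset.sum_ite_eq (Finset.range p) ((j : ℕ))
      (fun m => if (i : ℕ) = t + (p - 1 - m) then (1 : Polynomial k) else 0),
    if_pos (Finset.mem_range.mpr j.isLt)]

include hp in
theorem ker_le_range (z : B k p ⊗[Polynomial k] B k p) (hz : rdelta k p z = 0) :
    ∃ u, rsigma k p u = z := by
  have hpos := hp.pos
  set F := toW k p hp z with hF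
  set u : B k p ⊗[Polynomial k] B k p := ∑ t : Fin p,
    F ⟨p - 1, by omega⟩ t • ((Bd k p ^ (t : ℕ)) ⊗ₜ[Polynomial k] (1 : B k p)) with hu
  refine ⟨u, ?_⟩
  have hW : toW k p hp (rsigma k p u) = F := by
    funext i j
    rw [hu, map_sum, map_sum]
    simp only [map_smul, Finset.sum_apply, Pi.smul_apply, smul_eq_mul, toW_rsigma_pow_one]
    have h1 : ∀ t : Fin p, F ⟨p - 1, by omega⟩ t *
        (if (i : ℕ) = (t : ℕ) + (p - 1 - (j : ℕ)) then (1 : Polynomial k) else 0)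
        = (if (i : ℕ) = (t : ℕ) + (p - 1 - (j : ℕ)) then F ⟨p - 1, by omega⟩ t else 0) :=
      fun t => by split_ifs <;> ring
    rw [Finset.sum_congr rfl fun t _ => h1 t, sum_ite_shift p (i : ℕ) (p - 1 - (j : ℕ))]
    by_cases hc : p - 1 ≤ (i : ℕ) + (j : ℕ)
    · rw [dif_pos ⟨by have := j.isLt; omega, by have := i.isLt; omega⟩]
      rw [hF, diag_const k p hp z hz (p - 1) i j (by omega) hc]
      exact congrArg _ (Fin.ext (by
        show (i : ℕ) - (p - 1 - (j : ℕ)) = (i : ℕ) + (j : ℕ) - (p - 1)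
        have := j.isLt
        omega))
    · rw [dif_neg (by have := j.isLt; have := i.isLt; omega)]
      rw [hF]
      exact (low_zero k p hp z hz p i j (by omega) (by have := j.isLt; omega)).symm
  calc rsigma k p u = toBe k p (toW k p hp (rsigma k p u)) := (toBe_toW k p hp _).symm
    _ = toBe k p (toW k p hp z) := by rw [hW, hF]
    _ = z := toBe_toW k p hp z

end S17

/-- In `B^e = B ⊗_{k[x]} B`, the kernel of right multiplication by
`δ = d ⊗ 1 - 1 ⊗ d` equals the left ideal generated by
`σ = ∑_{i=0}^{p-1} d^(p-1-i) ⊗ d^i`, i.e. the range of right multiplication by `σ`. -/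
theorem statement17 (k : Type) [Field k] (p : ℕ) (hp : p.Prime) [CharP k p] :
    LinearMap.ker (rdelta k p) = LinearMap.range (rsigma k p) := by
  apply le_antisymm
  · intro z hz
    rw [LinearMap.mem_ker] at hz
    obtain ⟨u, hu⟩ := S17.ker_le_range k p hp z hz
    exact LinearMap.mem_range.mpr ⟨u, hu⟩
  · rintro z ⟨y, rfl⟩
    exact LinearMap.mem_ker.mpr (S17.rdelta_rsigma k p y)
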